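/- Let f and f̃ be sp-triangular homomorphisms of Λ with coefficient families m and m̃ respectively. If m_{(1^i),(1^j)} = m̃_{(1^i),(1^j)} for all i > j ≥ 0, then f = f̃. -/

import Mathlib

open scoped BigOperators

noncomputable section

/-- The ring `Λ = ℝ[h₁, h₂, …]`: the variable `n : ℕ` represents `h_{n+1}`. -/
abbrev Lam : Type := MvPolynomial ℕ ℝ

/-- `H m` is the generator `h_m` of `Λ` for `m ≥ 1`, with the conventions `h_0 = 1`
and `h_m = 0` for `m < 0`. -/
def H (m : ℤ) : Lam :=
  if 1 ≤ m then MvPolynomial.X (m.toNat - 1) else if m = 0 then 1 else 0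

/-- A partition: an antitone, eventually-zero sequence of natural numbers;
`parts 0` is the first part `λ₁`. -/
structure Ptn where
  parts : ℕ → ℕ
  antitone' : ∀ ⦃i j : ℕ⦄, i ≤ j → parts j ≤ parts i
  eventually_zero : ∃ N, ∀ i, N ≤ i → parts i = 0

namespace Ptn

/-- The number of (nonzero) parts of a partition. -/
def len (μ : Ptn) : ℕ := sInf {N | ∀ i, N ≤ i → μ.parts i = 0}

/-- The size `|μ| = μ₁ + μ₂ + ⋯` of a partition. -/
def size (μ : Ptn) : ℕ := ∑ᶠ i, μ.parts i

/-- Extended dominance order: `μ.dle lam` iff `μ₁ + ⋯ + μ_k ≤ lam₁ + ⋯ + lam_k` for all `k`. -/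
def dle (μ lam : Ptn) : Prop :=
  ∀ k : ℕ, ∑ i ∈ Finset.range k, μ.parts i ≤ ∑ i ∈ Finset.range k, lam.parts i

end Ptn

/-- The Schur function `s_λ = det(h_{λ_i - i + j})_{1 ≤ i,j ≤ len λ}` in `Λ`. -/
def sF (lam : Ptn) : Lam :=
  (Matrix.of fun i j : Fin lam.len => H ((lam.parts i.1 : ℤ) - i.1 + j.1)).det

/-- The symplectic universal character
`sp_λ = ½ · det(h_{λ_i - i + j} + h_{λ_i - i - j + 2})_{1 ≤ i,j ≤ len λ}`, with `sp_∅ = 1`. -/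
def spF (lam : Ptn) : Lam :=
  if lam.len = 0 then 1 else
    (2⁻¹ : ℝ) • (Matrix.of fun i j : Fin lam.len =>
      H ((lam.parts i.1 : ℤ) - i.1 + j.1) + H ((lam.parts i.1 : ℤ) - i.1 - j.1)).det

/-- `f` is an sp-triangular homomorphism with coefficient family `m`:
`m lam lam = 1`, `m lam mu = 0` unless `mu ≤ lam` in extended dominance order, and
`f(s_λ) = ∑_{μ} m_{λμ} sp_μ` for every partition `λ`. -/
def IsSpTriangular (f : Lam →ₐ[ℝ] Lam) (m : Ptn → Ptn → ℝ) : Prop :=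
  (∀ lam, m lam lam = 1) ∧
  (∀ lam mu, m lam mu ≠ 0 → mu.dle lam) ∧
  (∀ lam, f (sF lam) = ∑ᶠ mu : Ptn, m lam mu • spF mu)

/-- The column partition `(1^i)`. -/
def colP (i : ℕ) : Ptn where
  parts := fun k => if k < i then 1 else 0
  antitone' := by intro k l hkl; (try dsimp only); split_ifs <;> omega
  eventually_zero := ⟨i, fun k hk => by (try dsimp only); split_ifs <;> omega⟩

/-- The one-row partition `(k)`. -/
def rowP (k : ℕ) : Ptn where
  parts := fun i => if i = 0 then k else 0
  antitone' := by intro i j hij; (try dsimp only); split_ifs <;> omega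
  eventually_zero := ⟨1, fun i hi => by (try dsimp only); split_ifs <;> omega⟩

/-- The rectangular partition `(k^d)`: `d` parts equal to `k`. -/
def rectP (k d : ℕ) : Ptn where
  parts := fun i => if i < d then k else 0
  antitone' := by intro i j hij; (try dsimp only); split_ifs <;> omega
  eventually_zero := ⟨d, fun i hi => by (try dsimp only); split_ifs <;> omega⟩

/-- The empty partition `∅`. -/
def emptyP : Ptn where
  parts := fun _ => 0
  antitone' := by intro i j _; exact le_rfl
  eventually_zero := ⟨0, fun _ _ => rfl⟩

/-- The hook partition `(a, 1^b)`: one part `a ≥ 1` followed by `b` parts equal to `1`. -/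
def hookP (a b : ℕ) (ha : 1 ≤ a) : Ptn where
  parts := fun i => if i = 0 then a else if i ≤ b then 1 else 0
  antitone' := by intro i j hij; (try dsimp only); split_ifs <;> omega
  eventually_zero := ⟨b + 1, fun i hi => by (try dsimp only); split_ifs <;> omega⟩

/-- The complement of `μ` in the `ℓ × m` rectangle, rotated by 180°:
its `i`-th part (0-indexed, `i < ℓ`) is `m - μ_{ℓ-i}`. -/
def complP (ℓ m : ℕ) (μ : Ptn) : Ptn where
  parts := fun i => if i < ℓ then m - μ.parts (ℓ - 1 - i) else 0
  antitone' := by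
    intro i j hij; (try dsimp only); split_ifs with hj hi
    · exact Nat.sub_le_sub_left (μ.antitone' (by omega)) m
    · omega
    · exact Nat.zero_le _
    · exact le_rfl
  eventually_zero := ⟨ℓ, fun i hi => by (try dsimp only); split_ifs <;> omega⟩

open Classical in
/-- The complete homogeneous symmetric power series of degree `m` in the variables from `S`:
the sum of all monomials of degree `m` supported on `S`; it is `1` for `m = 0` and `0` for
`m < 0`. -/
def hOn {σ : Type} (S : Set σ) (m : ℤ) : MvPowerSeries σ ℝ :=
  fun d => if 0 ≤ m ∧ ((d.sum fun _ e => e : ℕ) : ℤ) = m ∧ (↑d.support : Set σ) ⊆ S then 1 else 0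

open Classical in
/-- `p(x_v)`: the one-variable power series with coefficient sequence `a`, evaluated at the
variable `v`. -/
def pAt {σ : Type} (a : ℕ → ℝ) (v : σ) : MvPowerSeries σ ℝ :=
  fun d => if (↑d.support : Set σ) ⊆ ({v} : Set σ) then a (d v) else 0

/-- The degree-`N` homogeneous component of a multivariate power series. -/
def homComp {σ : Type} (N : ℕ) (F : MvPowerSeries σ ℝ) : MvPowerSeries σ ℝ :=
  fun d => if (d.sum fun _ e => e) = N then MvPowerSeries.coeff d F else 0

/-- `∏_{1 ≤ i < j ≤ n} (1 - x_i x_j)` in `ℝ[[x_1, …, x_n]]`. -/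
def kappaDen (n : ℕ) : MvPowerSeries (Fin n) ℝ :=
  ∏ q ∈ Finset.univ.filter (fun q : Fin n × Fin n => q.1 < q.2),
    (1 - MvPowerSeries.X q.1 * MvPowerSeries.X q.2)

/-- `κ_p^{(n)} = ∏_{i=1}^n p(x_i) / ∏_{1 ≤ i < j ≤ n} (1 - x_i x_j)` in `ℝ[[x_1, …, x_n]]`,
where `a` is the coefficient sequence of `p`. -/
def kappaN (a : ℕ → ℝ) (n : ℕ) : MvPowerSeries (Fin n) ℝ :=
  (∏ i : Fin n, pAt a i) * MvPowerSeries.invOfUnit (kappaDen n) 1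

/-- The Schur polynomial `s_μ(x_1, …, x_n) = det(h_{μ_i - i + j}(x_1, …, x_n))_{1 ≤ i,j ≤ n}`
as a power series in `ℝ[[x_1, …, x_n]]`. -/
def schurPow (n : ℕ) (p : ℕ → ℕ) : MvPowerSeries (Fin n) ℝ :=
  (Matrix.of fun i j : Fin n => hOn (Set.univ : Set (Fin n)) ((p i.1 : ℤ) - i.1 + j.1)).det

/-- `c` is the family of coefficients expressing the degree-`n` homogeneous component of `F`
in the basis of Schur polynomials `{s_μ(x_1, …, x_n) : |μ| = n}`. -/
def SchurExpansion (n : ℕ) (F : MvPowerSeries (Fin n) ℝ) (c : Ptn → ℝ) : Prop :=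
  homComp n F = ∑ᶠ (μ : Ptn) (_ : μ.size = n), c μ • schurPow n μ.parts

/-- `x = ⟨κ_p, s_ν⟩`: the coefficient of `s_ν(x_1, …, x_n)` (`n = |ν|`) in the Schur-basis
expansion of the degree-`n` homogeneous component of `κ_p^{(n)}`. -/
def KappaCoeff (a : ℕ → ℝ) (ν : Ptn) (x : ℝ) : Prop :=
  ∃ c : Ptn → ℝ, SchurExpansion ν.size (kappaN a ν.size) c ∧ c ν = x

/-- The power series `p` with coefficient sequence `a` is κ-positive:
`⟨κ_p, s_ν⟩ ≥ 0` for every (nonempty) partition `ν`. -/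
def KappaPositive (a : ℕ → ℝ) : Prop :=
  ∀ ν : Ptn, ν.len ≠ 0 → ∀ x : ℝ, KappaCoeff a ν x → 0 ≤ x

/-- `g_m(y) = ∑_{k=0}^m a_k h_{m-k}(y)` in the variables from `S` (`0` for `m < 0`). -/
def gY {σ : Type} (a : ℕ → ℝ) (S : Set σ) (m : ℤ) : MvPowerSeries σ ℝ :=
  if m < 0 then 0 else ∑ k ∈ Finset.range (m.toNat + 1), a k • hOn S (m - k)

end

namespace Stmt6

noncomputable section

lemma H_zero : H 0 = 1 := by simp [H]

lemma H_neg {m : ℤ} (hm : m < 0) : H m = 0 := by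
  rw [H, if_neg (by omega), if_neg (by omega)]

lemma Ptn.ext' {μ ν : Ptn} (h : μ.parts = ν.parts) : μ = ν := by
  cases μ; cases ν; simp_all

lemma parts_eq_zero (μ : Ptn) {i : ℕ} (h : μ.len ≤ i) : μ.parts i = 0 := by
  obtain ⟨N, hN⟩ := μ.eventually_zero
  have : μ.len ∈ {N | ∀ i, N ≤ i → μ.parts i = 0} := Nat.sInf_mem ⟨N, hN⟩
  exact this i h

lemma parts_ne_zero (μ : Ptn) {i : ℕ} (h : i < μ.len) : μ.parts i ≠ 0 := by
  intro h0
  have : μ.len ≤ i := Nat.sInf_le (fun j hj => Nat.le_zero.1 (h0 ▸ μ.antitone' hj))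
  omega

lemma colP_parts (n k : ℕ) : (colP n).parts k = if k < n then 1 else 0 := rfl

lemma colP_len (n : ℕ) : (colP n).len = n := by
  refine le_antisymm (Nat.sInf_le fun i hi => by rw [colP_parts, if_neg (by omega)]) ?_
  refine le_csInf ⟨n, fun i hi => by rw [colP_parts, if_neg (by omega)]⟩ fun N hN => ?_
  by_contra hlt
  have := hN (n - 1) (by omega)
  rw [colP_parts, if_pos (by omega)] at this
  omega

lemma colP_injective : Function.Injective colP := by
  intro i j hij
  by_contra hne
  have hc := congrArg Ptn.parts hij
  rcases Nat.lt_or_ge i j with hl | hl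
  · have h2 := congrFun hc i
    rw [colP_parts, colP_parts, if_neg (lt_irrefl i), if_pos hl] at h2
    exact absurd h2 (by omega)
  · have hl' : j < i := by omega
    have h2 := congrFun hc j
    rw [colP_parts, colP_parts, if_pos hl', if_neg (lt_irrefl j)] at h2
    exact absurd h2 (by omega)

lemma dle_colP {μ : Ptn} {n : ℕ} (h : μ.dle (colP n)) :
    ∃ j ≤ n, μ = colP j := by
  have hsum : ∀ k, ∑ i ∈ Finset.range k, (colP n).parts i = min k n := by
    intro k
    have hfil : (Finset.range k).filter (fun i => i < n) = Finset.range (min k n) := by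
      ext x; simp only [Finset.mem_filter, Finset.mem_range]; omega
    calc ∑ i ∈ Finset.range k, (colP n).parts i
        = ∑ i ∈ Finset.range k, (if i < n then 1 else 0) := by
          exact Finset.sum_congr rfl fun x _ => colP_parts n x
      _ = ∑ i ∈ (Finset.range k).filter (fun i => i < n), 1 := (Finset.sum_filter _ _).symm
      _ = min k n := by rw [hfil]; simp
  have h1 : μ.parts 0 ≤ 1 := by
    have := h 1
    rw [hsum 1] at this
    simpa using le_trans this (min_le_left 1 n)
  have hparts : ∀ i, μ.parts i = (colP μ.len).parts i := by
    intro i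
    rcases Nat.lt_or_ge i μ.len with hi | hi
    · have hne := parts_ne_zero μ hi
      have hle := le_trans (μ.antitone' (Nat.zero_le i)) h1
      rw [colP_parts, if_pos hi]; omega
    · rw [colP_parts, if_neg (by omega), parts_eq_zero μ hi]
  have hμ : μ = colP μ.len := Ptn.ext' (funext hparts)
  have hlen : ∑ i ∈ Finset.range μ.len, μ.parts i = μ.len := by
    rw [Finset.sum_congr rfl (fun x hx => by
      rw [hparts x, colP_parts, if_pos (Finset.mem_range.1 hx)])]
    simp
  have := h μ.len
  rw [hsum μ.len, hlen] at this
  exact ⟨μ.len, by omega, hμ⟩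

/-- The Hessenberg-type matrix whose determinant gives `e`-like recursions. -/
def Dm (n : ℕ) (a : ℤ) : Matrix (Fin n) (Fin n) Lam :=
  fun i j => if i.1 = 0 then H (a + j.1) else H (1 - i.1 + j.1)

lemma Dm_apply (n : ℕ) (a : ℤ) (i j : Fin n) :
    Dm n a i j = if i.1 = 0 then H (a + j.1) else H (1 - i.1 + j.1) := rfl

/-- `Ef n = e_n`, the determinant form of `s_{(1^n)}`. -/
def Ef (n : ℕ) : Lam := (Dm n 1).det

lemma sF_colP (n : ℕ) : sF (colP n) = Ef n := by
  rw [sF, colP_len n]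
  congr 1
  funext i j
  have hp : (colP n).parts i.1 = 1 := by rw [colP_parts, if_pos i.2]
  rw [Matrix.of_apply, hp, Dm_apply]
  split_ifs with h0
  · congr 1 <;> (push_cast [h0]; try ring)
  · congr 1 <;> (push_cast; try ring)

lemma Dm_det_one (a : ℤ) : (Dm 1 a).det = H a := by
  rw [Matrix.det_fin_one, Dm_apply]
  norm_num

lemma Dm_det_rec (n : ℕ) (a : ℤ) :
    (Dm (n + 2) a).det = H a * Ef (n + 1) - (Dm (n + 1) (a + 1)).det := by
  rw [Matrix.det_succ_column_zero, Fin.sum_univ_succ, Fin.sum_univ_succ]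
  have hrest : ∀ i : Fin n,
      ((-1 : Lam) ^ (((i.succ.succ : Fin (n+2))) : ℕ) * Dm (n+2) a i.succ.succ 0 *
        ((Dm (n+2) a).submatrix (Fin.succAbove i.succ.succ) Fin.succ).det) = 0 := by
    intro i
    have hz : Dm (n+2) a i.succ.succ 0 = 0 := by
      rw [Dm_apply, if_neg (by simp), Fin.val_zero]
      refine H_neg ?_
      have hv : ((i.succ.succ : Fin (n+2)) : ℕ) = i.1 + 2 := rfl
      rw [hv]; push_cast; omega
    rw [hz]; ring
  rw [Finset.sum_eq_zero (fun i _ => hrest i), add_zero]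
  have hsub0 : (Dm (n+2) a).submatrix (0 : Fin (n+2)).succAbove Fin.succ = Dm (n+1) 1 := by
    funext i j
    rw [Matrix.submatrix_apply, Fin.zero_succAbove, Dm_apply, Dm_apply,
        Fin.val_succ, Fin.val_succ, if_neg (by omega)]
    split_ifs with h0
    · congr 1; push_cast [h0]; ring
    · congr 1; push_cast; ring
  have hsub1 : (Dm (n+2) a).submatrix (1 : Fin (n+2)).succAbove Fin.succ
      = Dm (n+1) (a + 1) := by
    funext i j
    rw [Matrix.submatrix_apply]
    rcases Nat.eq_zero_or_pos i.1 with h0 | h0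
    · have hv : ((1 : Fin (n+2)).succAbove i).1 = 0 := by
        rw [Fin.succAbove_of_castSucc_lt]
        · simpa using h0
        · rw [Fin.lt_iff_val_lt_val, Fin.coe_castSucc, Fin.val_one]; omega
      rw [Dm_apply, Dm_apply, if_pos hv, if_pos h0, Fin.val_succ]
      congr 1; push_cast; ring
    · have hv : ((1 : Fin (n+2)).succAbove i).1 = i.1 + 1 := by
        rw [Fin.succAbove_of_le_castSucc]
        · exact Fin.val_succ i
        · rw [Fin.le_iff_val_le_val, Fin.coe_castSucc, Fin.val_one]; omega
      rw [Dm_apply, Dm_apply, hv, if_neg (by omega), if_neg (by omega), Fin.val_succ]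
      congr 1; push_cast; ring
  rw [Fin.succ_zero_eq_one, hsub0, hsub1]
  have e0 : Dm (n+2) a 0 0 = H a := by
    rw [Dm_apply, Fin.val_zero, if_pos rfl]
    norm_num
  have e1 : Dm (n+2) a 1 0 = 1 := by
    rw [Dm_apply, if_neg (by rw [Fin.val_one]; omega), Fin.val_one, Fin.val_zero]
    norm_num [H_zero]
  rw [e0, e1, Ef, Fin.val_zero, Fin.val_one]
  push_cast
  ring

lemma H_mem (A : Subalgebra ℝ Lam) (hE : ∀ n, Ef n ∈ A) (n : ℕ) :
    H (n : ℤ) ∈ A := by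
  induction n using Nat.strong_induction_on with
  | _ n ih =>
    rcases n with _ | n'
    · rw [Nat.cast_zero, H_zero]; exact A.one_mem
    · -- n = n' + 1 ≥ 1
      have aux : ∀ j a : ℕ, 1 ≤ a → (∀ k, k < a + j → H (k : ℤ) ∈ A) →
          (Dm (j + 1) (a : ℤ)).det ∈ A → H ((a : ℤ) + (j : ℤ)) ∈ A := by
        intro j
        induction j with
        | zero =>
          intro a _ _ hD
          rw [Dm_det_one] at hD
          simpa using hD
        | succ j ihj =>
          intro a ha hk hD
          have hHa : H (a : ℤ) ∈ A := hk a (by omega)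
          have hD' : (Dm (j + 1) ((a : ℤ) + 1)).det ∈ A := by
            have : (Dm (j + 1) ((a : ℤ) + 1)).det
                = H (a : ℤ) * Ef (j + 1) - (Dm (j + 2) (a : ℤ)).det := by
              rw [Dm_det_rec]; ring
            rw [this]
            exact A.sub_mem (A.mul_mem hHa (hE (j + 1))) hD
          have := ihj (a + 1) (by omega) (fun k hk' => hk k (by omega)) (by push_cast; exact hD')
          have harith : (((a : ℕ) + 1 : ℕ) : ℤ) + (j : ℤ) = (a : ℤ) + ((j : ℤ) + 1) := by
            push_cast; ring
          rwa [harith] at this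
      have := aux n' 1 le_rfl (fun k hk => by
          have : k < n' + 1 := by omega
          exact ih k this) (by
        have : (Dm (n' + 1) ((1 : ℕ) : ℤ)).det = Ef (n' + 1) := by rw [Ef]; norm_num
        rw [this]; exact hE (n' + 1))
      have harith : ((1 : ℕ) : ℤ) + (n' : ℤ) = ((n' + 1 : ℕ) : ℤ) := by push_cast; ring
      rwa [harith] at this

lemma expand_col (f : Lam →ₐ[ℝ] Lam) (m : Ptn → Ptn → ℝ) (hf : IsSpTriangular f m)
    (n : ℕ) :
    f (sF (colP n)) = ∑ j ∈ Finset.range (n + 1), m (colP n) (colP j) • spF (colP j) := by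
  classical
  rw [hf.2.2 (colP n)]
  rw [finsum_eq_finset_sum_of_support_subset _
      (s := (Finset.range (n + 1)).image colP) ?_]
  · rw [Finset.sum_image (fun a _ b _ hab => colP_injective hab)]
  · intro mu hmu
    have hm : m (colP n) mu ≠ 0 := by
      intro h0
      apply hmu
      simp [h0]
    obtain ⟨j, hj, rfl⟩ := dle_colP (hf.2.1 _ _ hm)
    simp only [Finset.coe_image, Set.mem_image, Finset.mem_coe, Finset.mem_range]
    exact ⟨j, by omega, rfl⟩

end

end Stmt6

/-- Two sp-triangular homomorphisms whose coefficient families agree on all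
pairs of column partitions `((1^i), (1^j))`, `i > j ≥ 0`, are equal. -/
theorem statement6 (f ftil : Lam →ₐ[ℝ] Lam) (m mtil : Ptn → Ptn → ℝ)
    (hf : IsSpTriangular f m) (hftil : IsSpTriangular ftil mtil)
    (h : ∀ i j : ℕ, j < i → m (colP i) (colP j) = mtil (colP i) (colP j)) :
    f = ftil := by
  open Stmt6 in
  have hE : ∀ k, Stmt6.Ef k ∈ AlgHom.equalizer f ftil := by
    intro k
    rw [AlgHom.mem_equalizer, ← Stmt6.sF_colP]
    rw [Stmt6.expand_col f m hf, Stmt6.expand_col ftil mtil hftil]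
    refine Finset.sum_congr rfl fun j hj => ?_
    rcases eq_or_lt_of_le (Nat.lt_succ_iff.1 (Finset.mem_range.1 hj)) with rfl | hlt
    · rw [hf.1, hftil.1]
    · rw [h k j hlt]
  apply MvPolynomial.algHom_ext
  intro n
  have hX : (MvPolynomial.X n : Lam) = H ((n + 1 : ℕ) : ℤ) := by
    rw [H, if_pos (by omega)]
    simp
  rw [hX]
  exact Stmt6.H_mem _ hE (n + 1)
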